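/- Let T be an 𝒪-operator on a bimodule (V; L, R) over a pre-Lie algebra (g, ·), i.e. T(u)·T(v) = T(L_{T(u)}v + R_{T(v)}u) for all u,v ∈ V. Then u ·^T v := L_{T(u)}v + R_{T(v)}u defines a pre-Lie algebra structure on V, and T is a pre-Lie algebra homomorphism from (V, ·^T) to (g, ·). -/
import Mathlib


/-- The pre-Lie identity for a multiplication on an additive group. -/
def IsPreLieMul {A : Type*} [AddCommGroup A] (f : A → A → A) : Prop :=
  ∀ x y z : A, f (f x y) z - f x (f y z) = f (f y x) z - f y (f x z)

/-- Let `T` be an 𝒪-operator on a bimodule `(V; L, R)` over a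
pre-Lie algebra `(g, ·)`, i.e. `T(u)·T(v) = T(L_{T(u)}v + R_{T(v)}u)`.  Then
`u ·^T v := L_{T(u)}v + R_{T(v)}u` is a pre-Lie structure on `V` and `T` is a
pre-Lie homomorphism from `(V, ·^T)` to `(g, ·)`. -/
theorem O_operator_induced_preLie
    {𝕜 G V : Type*} [Field 𝕜] [CharZero 𝕜] [AddCommGroup G] [Module 𝕜 G]
    [AddCommGroup V] [Module 𝕜 V]
    (m : G →ₗ[𝕜] G →ₗ[𝕜] G)
    (hm : ∀ x y z : G, m (m x y) z - m x (m y z) = m (m y x) z - m y (m x z))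
    (L R : G →ₗ[𝕜] Module.End 𝕜 V)
    (hbim1 : ∀ (x y : G) (u : V),
      L x (L y u) - L (m x y) u = L y (L x u) - L (m y x) u)
    (hbim2 : ∀ (x y : G) (u : V),
      L x (R y u) - R y (L x u) = R (m x y) u - R y (R x u))
    (T : V →ₗ[𝕜] G)
    (hT : ∀ u v : V, m (T u) (T v) = T (L (T u) v + R (T v) u)) :
    IsPreLieMul (fun u v : V => L (T u) v + R (T v) u) ∧
      ∀ u v : V, T (L (T u) v + R (T v) u) = m (T u) (T v) := by
  refine ⟨?_, fun u v => (hT u v).symm⟩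
  intro u v w
  simp only
  have h1 := hbim1 (T u) (T v) w
  have h2 := hbim2 (T u) (T w) v
  have h3 := hbim2 (T v) (T w) u
  have e1 : T (L (T u) v + R (T v) u) = m (T u) (T v) := (hT u v).symm
  have e2 : T (L (T v) u + R (T u) v) = m (T v) (T u) := (hT v u).symm
  have e3 : T (L (T v) w + R (T w) v) = m (T v) (T w) := (hT v w).symm
  have e4 : T (L (T u) w + R (T w) u) = m (T u) (T w) := (hT u w).symm
  rw [e1, e2, e3, e4]
  simp only [map_add, LinearMap.add_apply]
  linear_combination (norm := module) -h1 - h2 + h3
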